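/- Let M be a random m×n GF(2) matrix with i.i.d. Bernoulli(p) entries (p ≤ 1/2), and B an m×s GF(2) matrix of full rank s < m such that every set of at most t rows of B is linearly independent. Let Y be uniform on a set S₀ ⊆ {0,1}^n of size 2^k and R uniform on {0,1}^s, all independent. Then Pr[MY = BR] ≤ 2^{−m}·(1 + 2^{m−s−k}·e^{n·e^{−2pt}}). -/

import Mathlib

open Finset
open scoped Classical

noncomputable def chi (a : ZMod 2) : ℝ := if a = 0 then 1 else -1

lemma zmod2_cases (a : ZMod 2) : a = 0 ∨ a = 1 := by revert a; decide

lemma zmod2_eq_iff (a b : ZMod 2) : a = b ↔ a + b = 0 := by revert a b; decide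

lemma chi_add (a b : ZMod 2) : chi (a + b) = chi a * chi b := by
  rcases zmod2_cases a with h | h <;> rcases zmod2_cases b with h' | h' <;>
    subst h <;> subst h' <;>
    (norm_num [chi, show ((1:ZMod 2) + 1) = 0 from rfl]; try decide)

lemma sum_zmod2 (f : ZMod 2 → ℝ) : ∑ a, f a = f 0 + f 1 :=
  Fin.sum_univ_two f

lemma chi_sum {ι : Type*} (s : Finset ι) (f : ι → ZMod 2) :
    chi (∑ i ∈ s, f i) = ∏ i ∈ s, chi (f i) := by
  induction s using Finset.cons_induction with
  | empty => simp [chi]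
  | cons a s ha ih => rw [Finset.sum_cons, Finset.prod_cons, chi_add, ih]

lemma sum_chi {N : ℕ} (v : Fin N → ZMod 2) :
    ∑ c : Fin N → ZMod 2, chi (∑ i, v i * c i) = if v = 0 then (2:ℝ)^N else 0 := by
  have h1 : ∀ c : Fin N → ZMod 2, chi (∑ i, v i * c i) = ∏ i, chi (v i * c i) :=
    fun c => chi_sum _ _
  simp_rw [h1]
  rw [← Fintype.prod_sum fun i (a : ZMod 2) => chi (v i * a)]
  have h2 : ∀ w : ZMod 2, ∑ a : ZMod 2, chi (w * a) = if w = 0 then (2:ℝ) else 0 := by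
    intro w
    rw [sum_zmod2]
    rcases zmod2_cases w with h | h <;> norm_num [h, chi]
  simp_rw [h2]
  by_cases hv : v = 0
  · simp [hv]
  · obtain ⟨i, hi⟩ := Function.ne_iff.mp hv
    rw [if_neg hv]
    exact Finset.prod_eq_zero (Finset.mem_univ i) (if_neg hi)

lemma entry_sum (p : ℝ) (u v : ZMod 2) :
    ∑ a : ZMod 2, (if a = 1 then p else 1-p) * chi (u * (a * v))
      = if u * v = 0 then 1 else 1 - 2*p := by
  rw [sum_zmod2]
  by_cases h : u * v = 0
  · norm_num [chi, h]
  · have h1 : u * v = 1 := (zmod2_cases _).resolve_left h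
    norm_num [chi, h1, show (1:ZMod 2) ≠ 0 by decide]
    try ring

lemma sum_M {m n : ℕ} (p : ℝ) (c : Fin m → ZMod 2) (y : Fin n → ZMod 2) :
    ∑ M : Matrix (Fin m) (Fin n) (ZMod 2),
      (∏ i, ∏ j, if M i j = 1 then p else 1-p) * chi (∑ i, c i * M.mulVec y i)
      = ∏ i, ∏ j, (if c i * y j = 0 then (1:ℝ) else 1 - 2*p) := by
  have key : ∑ M : Fin m → Fin n → ZMod 2,
      (∏ i, ∏ j, if M i j = 1 then p else 1-p) *
        chi (∑ i, c i * ∑ j, M i j * y j)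
      = ∏ i, ∏ j, (if c i * y j = 0 then (1:ℝ) else 1 - 2*p) := by
    have h1 : ∀ M : Fin m → Fin n → ZMod 2,
        (∏ i, ∏ j, if M i j = 1 then p else 1-p) *
          chi (∑ i, c i * ∑ j, M i j * y j)
        = ∏ i, ∏ j, ((if M i j = 1 then p else 1-p) * chi (c i * (M i j * y j))) := by
      intro M
      have : chi (∑ i, c i * ∑ j, M i j * y j)
          = ∏ i, ∏ j, chi (c i * (M i j * y j)) := by
        rw [chi_sum]
        congr 1; funext i
        rw [Finset.mul_sum]
        rw [chi_sum]
      rw [this, ← Finset.prod_mul_distrib]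
      congr 1; funext i
      rw [← Finset.prod_mul_distrib]
    simp_rw [h1]
    rw [← Fintype.prod_sum fun i (r : Fin n → ZMod 2) =>
      ∏ j, ((if r j = 1 then p else 1-p) * chi (c i * (r j * y j)))]
    congr 1; funext i
    rw [← Fintype.prod_sum fun j (a : ZMod 2) =>
      ((if a = 1 then p else 1-p) * chi (c i * (a * y j)))]
    congr 1; funext j
    exact entry_sum p (c i) (y j)
  have := key
  simp only [Matrix.mulVec, dotProduct] at this ⊢
  exact this

noncomputable def wt {N : ℕ} (x : Fin N → ZMod 2) : ℕ :=
  (Finset.univ.filter fun i => x i ≠ 0).card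

lemma prod_ite_pow {N : ℕ} (x : Fin N → ZMod 2) (A : ℝ) :
    ∏ j, (if x j = 0 then 1 else A) = A ^ wt x := by
  rw [← Finset.prod_filter_mul_prod_filter_not Finset.univ (fun j => x j = 0)]
  have h1 : ∏ j ∈ Finset.univ.filter (fun j => x j = 0), (if x j = 0 then (1:ℝ) else A) = 1 :=
    Finset.prod_eq_one (by intro j hj; rw [Finset.mem_filter] at hj; simp [hj.2])
  have h2 : ∏ j ∈ Finset.univ.filter (fun j => ¬ x j = 0), (if x j = 0 then (1:ℝ) else A)
      = A ^ wt x := by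
    rw [Finset.prod_congr rfl (fun j hj => ?_), Finset.prod_const]
    · rfl
    · rw [Finset.mem_filter] at hj; simp [hj.2]
  rw [h1, h2, one_mul]

lemma wt_zero {N : ℕ} : wt (0 : Fin N → ZMod 2) = 0 := by
  simp [wt]

lemma prod_prod_ite {m n : ℕ} (c : Fin m → ZMod 2) (y : Fin n → ZMod 2) (A : ℝ) :
    ∏ i, ∏ j, (if c i * y j = 0 then (1:ℝ) else A) = (A ^ wt y) ^ wt c := by
  have hin : ∀ i, ∏ j, (if c i * y j = 0 then (1:ℝ) else A)
      = if c i = 0 then 1 else A ^ wt y := by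
    intro i
    by_cases h : c i = 0
    · simp [h]
    · have h1 : c i = 1 := (zmod2_cases _).resolve_left h
      rw [if_neg h]
      simp only [h1, one_mul]
      exact prod_ite_pow y A
  simp_rw [hin]
  exact prod_ite_pow c (A ^ wt y)

lemma sum_pow_wt {n : ℕ} (r : ℝ) :
    ∑ y : Fin n → ZMod 2, r ^ wt y = (1+r)^n := by
  have h1 : ∀ y : Fin n → ZMod 2, r ^ wt y = ∏ j, (if y j = 0 then 1 else r) :=
    fun y => (prod_ite_pow y r).symm
  simp_rw [h1]
  rw [← Fintype.prod_sum fun j (a : ZMod 2) => (if a = 0 then (1:ℝ) else r)]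
  have h2 : ∑ a : ZMod 2, (if a = 0 then (1:ℝ) else r) = 1 + r := by
    rw [sum_zmod2]; norm_num [show (1:ZMod 2) ≠ 0 by decide]
  simp_rw [h2]
  rw [Finset.prod_const, Finset.card_univ, Fintype.card_fin]

lemma card_ker {m s : ℕ} (B : Matrix (Fin m) (Fin s) (ZMod 2)) (hrank : B.rank = s) :
    (Finset.univ.filter fun c : Fin m → ZMod 2 => Matrix.vecMul c B = 0).card = 2^(m-s) := by
  classical
  have e1 : (Finset.univ.filter fun c : Fin m → ZMod 2 => Matrix.vecMul c B = 0).card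
      = Fintype.card {c : Fin m → ZMod 2 // Matrix.vecMul c B = 0} :=
    (Fintype.card_subtype _).symm
  have e2 : Fintype.card {c : Fin m → ZMod 2 // Matrix.vecMul c B = 0}
      = Fintype.card (LinearMap.ker B.vecMulLinear) :=
    Fintype.card_congr (Equiv.subtypeEquivRight (by
      intro c; simp [LinearMap.mem_ker]))
  have h2 : Module.finrank (ZMod 2) (LinearMap.range B.vecMulLinear) = s := by
    rw [← Matrix.mulVecLin_transpose]
    have : (Matrix.transpose B).rank = s := by rw [Matrix.rank_transpose, hrank]
    exact this
  have h1 := LinearMap.finrank_range_add_finrank_ker B.vecMulLinear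
  rw [Module.finrank_fin_fun, h2] at h1
  have hfr : Module.finrank (ZMod 2) (LinearMap.ker B.vecMulLinear) = m - s := by omega
  rw [e1, e2, Module.card_eq_pow_finrank (K := ZMod 2), ZMod.card, hfr]

lemma reorder4 {A B C D : Type*} (sa : Finset A) (sb : Finset B) (sc : Finset C) (sd : Finset D)
    (F : A → B → C → D → ℝ) :
    ∑ a ∈ sa, ∑ b ∈ sb, ∑ c ∈ sc, ∑ d ∈ sd, F a b c d
      = ∑ d ∈ sd, ∑ b ∈ sb, ∑ a ∈ sa, ∑ c ∈ sc, F a b c d := by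
  have h1 : ∀ a b, ∑ c ∈ sc, ∑ d ∈ sd, F a b c d
      = ∑ d ∈ sd, ∑ c ∈ sc, F a b c d := fun a b => Finset.sum_comm
  simp_rw [h1]
  have h2 : ∀ a, ∑ b ∈ sb, ∑ d ∈ sd, ∑ c ∈ sc, F a b c d
      = ∑ d ∈ sd, ∑ b ∈ sb, ∑ c ∈ sc, F a b c d := fun a => Finset.sum_comm
  simp_rw [h2]
  rw [Finset.sum_comm]
  exact Finset.sum_congr rfl fun d _ => Finset.sum_comm

/-- Let `M` be a random `m×n` GF(2) matrix with i.i.d. Bernoulli(p) entries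
(`p ≤ 1/2`), and `B` an `m×s` GF(2) matrix of full rank `s < m` whose every
set of at most `t` rows is linearly independent.  For `Y` uniform on a set
`S₀` of size `2^k` and `R` uniform on `{0,1}^s`, all independent,
`Pr[MY = BR] ≤ 2^{−m}·(1 + 2^{m−s−k}·e^{n·e^{−2pt}})`. -/
theorem stmt14 (m n s k t : ℕ) (hsm : s < m) (p : ℝ) (hp0 : 0 ≤ p) (hp : p ≤ 1/2)
    (B : Matrix (Fin m) (Fin s) (ZMod 2)) (hrank : B.rank = s)
    (hindep : ∀ T : Finset (Fin m), T.card ≤ t →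
      LinearIndependent (ZMod 2) (fun i : T => (B i.1 : Fin s → ZMod 2)))
    (S₀ : Finset (Fin n → ZMod 2)) (hS : S₀.card = 2^k) :
    (∑ M : Matrix (Fin m) (Fin n) (ZMod 2), ∑ y ∈ S₀, ∑ R : Fin s → ZMod 2,
        (∏ i, ∏ j, if M i j = 1 then p else 1 - p) * (S₀.card : ℝ)⁻¹ * ((2:ℝ)^s)⁻¹ *
          (if M.mulVec y = B.mulVec R then 1 else 0))
      ≤ ((2:ℝ)^m)⁻¹ *
          (1 + (2:ℝ)^((m:ℝ) - s - k) * Real.exp (n * Real.exp (-2*p*t))) := by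
    classical
  have hq0 : (0:ℝ) ≤ 1 - 2*p := by linarith
  have hq1 : (1:ℝ) - 2*p ≤ 1 := by linarith
  set q : ℝ := 1 - 2*p with hqdef
  set E : ℝ := Real.exp (n * Real.exp (-2*p*t)) with hEdef
  set K : Finset (Fin m → ZMod 2) :=
    Finset.univ.filter (fun c => Matrix.vecMul c B = 0) with hKdef
  -- character expansion of the indicator
  have expand : ∀ u w : Fin m → ZMod 2, (if u = w then (1:ℝ) else 0)
      = ((2:ℝ)^m)⁻¹ * ∑ c : Fin m → ZMod 2,
          chi (∑ i, c i * u i) * chi (∑ i, c i * w i) := by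
    intro u w
    have h1 : ∀ c : Fin m → ZMod 2, chi (∑ i, c i * u i) * chi (∑ i, c i * w i)
        = chi (∑ i, (fun i => u i + w i) i * c i) := by
      intro c
      rw [← chi_add, ← Finset.sum_add_distrib]
      congr 1
      refine Finset.sum_congr rfl fun i _ => ?_
      ring
    simp_rw [h1]
    rw [sum_chi]
    by_cases h : u = w
    · have hz : (fun i => u i + w i) = 0 := by
        funext i
        exact (zmod2_eq_iff _ _).mp (congrFun h i)
      rw [if_pos h, if_pos hz, inv_mul_cancel₀ (by positivity)]
    · have hz : (fun i => u i + w i) ≠ 0 := by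
        intro hc
        exact h (funext fun i => (zmod2_eq_iff _ _).mpr (congrFun hc i))
      rw [if_neg h, if_neg hz, mul_zero]
  -- main identity
  have hmain : (∑ M : Matrix (Fin m) (Fin n) (ZMod 2), ∑ y ∈ S₀, ∑ R : Fin s → ZMod 2,
        (∏ i, ∏ j, if M i j = 1 then p else 1 - p) * (S₀.card : ℝ)⁻¹ * ((2:ℝ)^s)⁻¹ *
          (if M.mulVec y = B.mulVec R then 1 else 0))
      = ((2:ℝ)^m)⁻¹ * ∑ c ∈ K, ∑ y ∈ S₀,
          (S₀.card : ℝ)⁻¹ * ((q ^ wt y) ^ wt c) := by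
    have stepA : (∑ M : Matrix (Fin m) (Fin n) (ZMod 2), ∑ y ∈ S₀, ∑ R : Fin s → ZMod 2,
          (∏ i, ∏ j, if M i j = 1 then p else 1 - p) * (S₀.card : ℝ)⁻¹ * ((2:ℝ)^s)⁻¹ *
            (if M.mulVec y = B.mulVec R then 1 else 0))
        = ∑ M : Matrix (Fin m) (Fin n) (ZMod 2), ∑ y ∈ S₀, ∑ R : Fin s → ZMod 2,
            ∑ c : Fin m → ZMod 2,
            ((2:ℝ)^m)⁻¹ * (S₀.card : ℝ)⁻¹ *
              ((∏ i, ∏ j, if M i j = 1 then p else 1 - p) *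
                chi (∑ i, c i * M.mulVec y i)) *
              (((2:ℝ)^s)⁻¹ * chi (∑ i, c i * B.mulVec R i)) := by
      refine Finset.sum_congr rfl fun M _ => Finset.sum_congr rfl fun y _ =>
        Finset.sum_congr rfl fun R _ => ?_
      rw [expand (M.mulVec y) (B.mulVec R), ← mul_assoc, Finset.mul_sum]
      refine Finset.sum_congr rfl fun c _ => ?_
      ring
    rw [stepA, reorder4]
    have percsum : ∀ c : Fin m → ZMod 2,
        (∑ y ∈ S₀, ∑ M : Matrix (Fin m) (Fin n) (ZMod 2), ∑ R : Fin s → ZMod 2,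
          ((2:ℝ)^m)⁻¹ * (S₀.card : ℝ)⁻¹ *
            ((∏ i, ∏ j, if M i j = 1 then p else 1 - p) *
              chi (∑ i, c i * M.mulVec y i)) *
            (((2:ℝ)^s)⁻¹ * chi (∑ i, c i * B.mulVec R i)))
        = if Matrix.vecMul c B = 0 then
            ((2:ℝ)^m)⁻¹ * ∑ y ∈ S₀, (S₀.card : ℝ)⁻¹ * ((q ^ wt y) ^ wt c)
          else 0 := by
      intro c
      have hMRsum : ∀ y : Fin n → ZMod 2,
          (∑ M : Matrix (Fin m) (Fin n) (ZMod 2), ∑ R : Fin s → ZMod 2,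
            ((2:ℝ)^m)⁻¹ * (S₀.card : ℝ)⁻¹ *
              ((∏ i, ∏ j, if M i j = 1 then p else 1 - p) *
                chi (∑ i, c i * M.mulVec y i)) *
              (((2:ℝ)^s)⁻¹ * chi (∑ i, c i * B.mulVec R i)))
          = ((2:ℝ)^m)⁻¹ * (S₀.card : ℝ)⁻¹ *
              ((∑ M : Matrix (Fin m) (Fin n) (ZMod 2),
                (∏ i, ∏ j, if M i j = 1 then p else 1 - p) *
                  chi (∑ i, c i * M.mulVec y i)) *
               (∑ R : Fin s → ZMod 2, ((2:ℝ)^s)⁻¹ * chi (∑ i, c i * B.mulVec R i))) := by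
        intro y
        have e1 : ∀ M : Matrix (Fin m) (Fin n) (ZMod 2),
            (∑ R : Fin s → ZMod 2,
              ((2:ℝ)^m)⁻¹ * (S₀.card : ℝ)⁻¹ *
                ((∏ i, ∏ j, if M i j = 1 then p else 1 - p) *
                  chi (∑ i, c i * M.mulVec y i)) *
                (((2:ℝ)^s)⁻¹ * chi (∑ i, c i * B.mulVec R i)))
            = (((2:ℝ)^m)⁻¹ * (S₀.card : ℝ)⁻¹ *
                ((∏ i, ∏ j, if M i j = 1 then p else 1 - p) *
                  chi (∑ i, c i * M.mulVec y i))) *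
              (∑ R : Fin s → ZMod 2, ((2:ℝ)^s)⁻¹ * chi (∑ i, c i * B.mulVec R i)) :=
          fun M => (Finset.mul_sum _ _ _).symm
        simp_rw [e1]
        rw [← Finset.sum_mul, ← Finset.mul_sum, mul_assoc]
      simp_rw [hMRsum]
      -- evaluate the R sum
      have hdot : ∀ R : Fin s → ZMod 2,
          (∑ i, c i * B.mulVec R i) = ∑ j, Matrix.vecMul c B j * R j := by
        intro R
        simpa [dotProduct] using Matrix.dotProduct_mulVec c B R
      have hRsum : (∑ R : Fin s → ZMod 2, ((2:ℝ)^s)⁻¹ * chi (∑ i, c i * B.mulVec R i))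
          = if Matrix.vecMul c B = 0 then 1 else 0 := by
        simp_rw [hdot]
        rw [← Finset.mul_sum, sum_chi]
        by_cases h : Matrix.vecMul c B = 0
        · rw [if_pos h, if_pos h, inv_mul_cancel₀ (by positivity)]
        · rw [if_neg h, if_neg h, mul_zero]
      have hMsum : ∀ y : Fin n → ZMod 2,
          (∑ M : Matrix (Fin m) (Fin n) (ZMod 2),
            (∏ i, ∏ j, if M i j = 1 then p else 1 - p) *
              chi (∑ i, c i * M.mulVec y i)) = (q ^ wt y) ^ wt c := by
        intro y
        rw [sum_M p c y, prod_prod_ite c y (1 - 2*p)]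
      simp_rw [hRsum, hMsum]
      by_cases hc : Matrix.vecMul c B = 0
      · simp only [if_pos hc, Finset.mul_sum]
        refine Finset.sum_congr rfl fun y _ => ?_
        ring
      · simp only [if_neg hc, mul_zero, Finset.sum_const_zero]
    simp_rw [percsum]
    rw [← Finset.sum_filter, ← hKdef, ← Finset.mul_sum]
  rw [hmain]
  have hcard2 : (S₀.card : ℝ) = 2^k := by rw [hS]; push_cast; ring
  have h0K : (0 : Fin m → ZMod 2) ∈ K :=
    Finset.mem_filter.mpr ⟨Finset.mem_univ _, Matrix.zero_vecMul B⟩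
  rw [← Finset.add_sum_erase _ _ h0K]
  have hF0 : (∑ y ∈ S₀, (S₀.card : ℝ)⁻¹ * ((q ^ wt y) ^ wt (0 : Fin m → ZMod 2))) = 1 := by
    simp only [wt_zero, pow_zero, mul_one]
    rw [Finset.sum_const, nsmul_eq_mul]
    rw [hcard2]
    rw [mul_inv_cancel₀ (by positivity)]
  rw [hF0]
  have hEnonneg : (0:ℝ) ≤ E := le_of_lt (Real.exp_pos _)
  have hbound : ∀ c ∈ K.erase 0,
      (∑ y ∈ S₀, (S₀.card : ℝ)⁻¹ * ((q ^ wt y) ^ wt c)) ≤ ((2:ℝ)^k)⁻¹ * E := by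
    intro c hc
    obtain ⟨hc0, hcK⟩ := Finset.mem_erase.mp hc
    have hker : Matrix.vecMul c B = 0 := (Finset.mem_filter.mp hcK).2
    have hwt : t + 1 ≤ wt c := by
      by_contra hlt
      push_neg at hlt
      have hTcard : (Finset.univ.filter fun i => c i ≠ 0).card ≤ t :=
        Nat.lt_succ_iff.mp hlt
      set T := Finset.univ.filter fun i => c i ≠ 0 with hT
      have hli := hindep T hTcard
      have hsum : (∑ i ∈ T, B i) = 0 := by
        funext j
        rw [Finset.sum_apply (M := fun _ => ZMod 2) j T (fun i => B i)]
        have hv : (∑ i, c i * B i j) = 0 := by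
          have := congrFun hker j
          simpa [Matrix.vecMul, dotProduct] using this
        calc (∑ i ∈ T, B i j) = ∑ i, c i * B i j := by
              rw [hT, Finset.sum_filter]
              refine Finset.sum_congr rfl fun i _ => ?_
              rcases zmod2_cases (c i) with h | h
              · simp [h]
              · simp [h]
          _ = 0 := hv
      obtain ⟨i0, hi0⟩ := Function.ne_iff.mp hc0
      have hi0T : i0 ∈ T := by
        rw [hT]; exact Finset.mem_filter.mpr ⟨Finset.mem_univ _, hi0⟩
      rw [Fintype.linearIndependent_iff] at hli
      have hz : (∑ i : T, (fun _ : T => (1:ZMod 2)) i • (B i.1 : Fin s → ZMod 2)) = 0 := by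
        simp only [one_smul]
        rw [Finset.sum_coe_sort T (fun i => (B i : Fin s → ZMod 2))]
        exact hsum
      exact one_ne_zero (hli (fun _ => 1) hz ⟨i0, hi0T⟩)
    have hterm : ∀ y ∈ S₀,
        (S₀.card:ℝ)⁻¹ * ((q ^ wt y) ^ wt c) ≤ (S₀.card:ℝ)⁻¹ * ((q^(t+1)) ^ wt y) := by
      intro y _
      have h1 : (q ^ wt y) ^ wt c = (q ^ wt c) ^ wt y := by
        rw [← pow_mul, ← pow_mul, Nat.mul_comm]
      rw [h1]
      have h2 : q ^ wt c ≤ q ^ (t+1) := pow_le_pow_of_le_one hq0 hq1 hwt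
      have h3 : (0:ℝ) ≤ q ^ wt c := pow_nonneg hq0 _
      exact mul_le_mul_of_nonneg_left (pow_le_pow_left₀ h3 h2 (wt y)) (by positivity)
    have hr0 : (0:ℝ) ≤ q^(t+1) := pow_nonneg hq0 _
    have hr : q^(t+1) ≤ Real.exp (-2*p*t) := by
      have hqe : q ≤ Real.exp (-(2*p)) := by
        have := Real.add_one_le_exp (-(2*p))
        rw [hqdef]; linarith
      calc q^(t+1) ≤ (Real.exp (-(2*p)))^(t+1) := pow_le_pow_left₀ hq0 hqe _
        _ = Real.exp (((t+1 : ℕ):ℝ) * (-(2*p))) := (Real.exp_nat_mul _ _).symm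
        _ ≤ Real.exp (-2*p*t) := by
            rw [Real.exp_le_exp]
            push_cast
            nlinarith [hp0]
    have hexp : (1 + q^(t+1))^n ≤ E := by
      calc (1 + q^(t+1))^n ≤ (Real.exp (q^(t+1)))^n := by
            apply pow_le_pow_left₀ (by positivity)
            have := Real.add_one_le_exp (q^(t+1)); linarith
        _ = Real.exp (n * q^(t+1)) := (Real.exp_nat_mul _ n).symm
        _ ≤ E := by
            rw [hEdef, Real.exp_le_exp]
            exact mul_le_mul_of_nonneg_left hr (by positivity)
    calc (∑ y ∈ S₀, (S₀.card : ℝ)⁻¹ * ((q ^ wt y) ^ wt c))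
        ≤ ∑ y ∈ S₀, (S₀.card:ℝ)⁻¹ * ((q^(t+1)) ^ wt y) := Finset.sum_le_sum hterm
      _ = (S₀.card:ℝ)⁻¹ * ∑ y ∈ S₀, (q^(t+1)) ^ wt y := by rw [Finset.mul_sum]
      _ ≤ (S₀.card:ℝ)⁻¹ * ∑ y : Fin n → ZMod 2, (q^(t+1)) ^ wt y := by
          refine mul_le_mul_of_nonneg_left ?_ (by positivity)
          exact Finset.sum_le_sum_of_subset_of_nonneg (Finset.subset_univ _)
            (fun y _ _ => pow_nonneg hr0 _)
      _ = (S₀.card:ℝ)⁻¹ * (1 + q^(t+1))^n := by rw [sum_pow_wt]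
      _ ≤ ((2:ℝ)^k)⁻¹ * E := by
          rw [hcard2]
          exact mul_le_mul_of_nonneg_left hexp (by positivity)
  have hsum_le : (∑ c ∈ K.erase 0, ∑ y ∈ S₀, (S₀.card : ℝ)⁻¹ * ((q ^ wt y) ^ wt c))
      ≤ (2:ℝ)^(m-s) * (((2:ℝ)^k)⁻¹ * E) := by
    calc (∑ c ∈ K.erase 0, ∑ y ∈ S₀, (S₀.card : ℝ)⁻¹ * ((q ^ wt y) ^ wt c))
        ≤ (K.erase 0).card • (((2:ℝ)^k)⁻¹ * E) := Finset.sum_le_card_nsmul _ _ _ hbound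
      _ = ((K.erase 0).card : ℝ) * (((2:ℝ)^k)⁻¹ * E) := nsmul_eq_mul _ _
      _ ≤ (2:ℝ)^(m-s) * (((2:ℝ)^k)⁻¹ * E) := by
          refine mul_le_mul_of_nonneg_right ?_ (by positivity)
          have h1 : (K.erase 0).card ≤ K.card := Finset.card_erase_le
          have h2 : K.card = 2^(m-s) := card_ker B hrank
          calc ((K.erase 0).card : ℝ) ≤ (K.card : ℝ) := Nat.cast_le.mpr h1
            _ = (2:ℝ)^(m-s) := by rw [h2]; push_cast; ring
  have hrpow : (2:ℝ)^((m:ℝ) - s - k) = (2:ℝ)^(m-s) * ((2:ℝ)^k)⁻¹ := by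
    have h1 : (m:ℝ) - s - k = ((m - s : ℕ) : ℝ) - (k : ℕ) := by
      push_cast [Nat.cast_sub hsm.le]; ring
    rw [h1, Real.rpow_sub (by norm_num), Real.rpow_natCast, Real.rpow_natCast,
      div_eq_mul_inv]
  rw [hrpow]
  refine mul_le_mul_of_nonneg_left ?_ (by positivity)
  rw [mul_assoc]
  linarith [hsum_le]
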